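/- Let x, δ ∈ ℝ^d with δ ≠ 0 and let p ∈ (0,1). Define the half-space H = {z ∈ ℝ^d : ⟨δ, z − x⟩ ≤ σ·‖δ‖₂·Φ⁻¹(p)}, where ⟨·,·⟩ is the Euclidean inner product. Then μ_x(H) = p and μ_{x+δ}(H) = Φ(Φ⁻¹(p) − ‖δ‖₂/σ). Consequently the Gaussian shift lower bound Φ(Φ⁻¹(p) − ‖δ‖₂/σ) for sets of μ_x-measure p is attained, i.e., it is tight. -/

import Mathlib

open MeasureTheory ProbabilityTheory Real
open scoped NNReal ENNReal
open scoped RealInnerProductSpace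

/-- `Phi` : cumulative distribution function of the standard real Gaussian N(0,1). -/
noncomputable def Phi : ℝ → ℝ := fun t => ((gaussianReal 0 1) (Set.Iic t)).toReal

/-- `PhiInv` : the standard Gaussian quantile function, inverse of `Phi` on (0,1). -/
noncomputable def PhiInv : ℝ → ℝ := Function.invFun Phi

/-- `gaussPi d σ x` : the isotropic Gaussian measure on ℝ^d with mean `x` and covariance σ²I,
i.e. the product measure whose i-th factor is the real Gaussian with mean `x i`, variance σ². -/
noncomputable def gaussPi (d : ℕ) (σ : ℝ) (x : EuclideanSpace ℝ (Fin d)) :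
    Measure (EuclideanSpace ℝ (Fin d)) :=
  (Measure.pi fun i => gaussianReal (x i) ⟨σ ^ 2, sq_nonneg σ⟩).map (MeasurableEquiv.toLp 2 (Fin d → ℝ))


lemma sqrt_const_eq (v₁ v₂ : ℝ) (h₁ : 0 < v₁) (h₂ : 0 < v₂) :
    Real.sqrt (2 * π * v₁) * Real.sqrt (2 * π * v₂)
      = Real.sqrt (2 * π * (v₁ + v₂)) * Real.sqrt (2 * π * (v₁ * v₂ / (v₁ + v₂))) := by
  rw [← Real.sqrt_mul (by positivity), ← Real.sqrt_mul (by positivity)]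
  congr 1
  field_simp

lemma pdf_mul (m₁ m₂ : ℝ) (v₁ v₂ : ℝ≥0) (hv₁ : v₁ ≠ 0) (hv₂ : v₂ ≠ 0) (z x : ℝ) :
    gaussianPDFReal m₁ v₁ x * gaussianPDFReal m₂ v₂ (z - x)
      = gaussianPDFReal (m₁ + m₂) (v₁ + v₂) z *
        gaussianPDFReal (m₁ + v₁ * (z - m₁ - m₂) / (v₁ + v₂)) (v₁ * v₂ / (v₁ + v₂)) x := by
  have h₁ : (0:ℝ) < v₁ := lt_of_le_of_ne v₁.2 (by exact_mod_cast Ne.symm hv₁)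
  have h₂ : (0:ℝ) < v₂ := lt_of_le_of_ne v₂.2 (by exact_mod_cast Ne.symm hv₂)
  have h₁₂ : (0:ℝ) < v₁ + v₂ := by positivity
  simp only [gaussianPDFReal, NNReal.coe_add, NNReal.coe_div, NNReal.coe_mul]
  rw [mul_mul_mul_comm, mul_mul_mul_comm _ (rexp _), ← Real.exp_add, ← Real.exp_add,
    ← mul_inv, ← mul_inv, sqrt_const_eq _ _ h₁ h₂]
  congr 2
  field_simp
  ring

lemma lint_conv (m₁ m₂ : ℝ) (v₁ v₂ : ℝ≥0) (hv₁ : v₁ ≠ 0) (hv₂ : v₂ ≠ 0) (z : ℝ) :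
    ∫⁻ x, gaussianPDF m₁ v₁ x * gaussianPDF m₂ v₂ (z - x)
      = gaussianPDF (m₁ + m₂) (v₁ + v₂) z := by
  have hv₃ : v₁ * v₂ / (v₁ + v₂) ≠ 0 := by
    apply div_ne_zero (mul_ne_zero hv₁ hv₂)
    simp [hv₁, hv₂]
  simp only [gaussianPDF]
  calc ∫⁻ x, ENNReal.ofReal (gaussianPDFReal m₁ v₁ x) *
        ENNReal.ofReal (gaussianPDFReal m₂ v₂ (z - x))
      = ∫⁻ x, ENNReal.ofReal (gaussianPDFReal (m₁ + m₂) (v₁ + v₂) z) *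
          ENNReal.ofReal (gaussianPDFReal (m₁ + v₁ * (z - m₁ - m₂) / (v₁ + v₂))
            (v₁ * v₂ / (v₁ + v₂)) x) := by
        congr 1; ext x
        rw [← ENNReal.ofReal_mul (gaussianPDFReal_nonneg _ _ _), pdf_mul m₁ m₂ v₁ v₂ hv₁ hv₂,
          ENNReal.ofReal_mul (gaussianPDFReal_nonneg _ _ _)]
    _ = ENNReal.ofReal (gaussianPDFReal (m₁ + m₂) (v₁ + v₂) z) := by
        have hrfl : ∀ (M : ℝ) (V : ℝ≥0) (x : ℝ),
            ENNReal.ofReal (gaussianPDFReal M V x) = gaussianPDF M V x := fun _ _ _ => rfl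
        simp only [hrfl]
        rw [lintegral_const_mul _ (measurable_gaussianPDF _ _),
          lintegral_gaussianPDF_eq_one _ hv₃, mul_one]

lemma gauss_conv (m₁ m₂ : ℝ) (v₁ v₂ : ℝ≥0) :
    ((gaussianReal m₁ v₁).prod (gaussianReal m₂ v₂)).map (fun p : ℝ × ℝ => p.1 + p.2)
      = gaussianReal (m₁ + m₂) (v₁ + v₂) := by
  rcases eq_or_ne v₁ 0 with rfl | hv₁
  · rw [gaussianReal_zero_var, Measure.dirac_prod,
      Measure.map_map (show Measurable (fun p : ℝ × ℝ => p.1 + p.2) from measurable_fst.add measurable_snd) measurable_prodMk_left]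
    have h1 : ((fun p : ℝ × ℝ => p.1 + p.2) ∘ Prod.mk m₁) = (m₁ + ·) := rfl
    rw [h1, gaussianReal_map_const_add, add_comm m₂ m₁, zero_add]
  rcases eq_or_ne v₂ 0 with rfl | hv₂
  · rw [gaussianReal_zero_var, Measure.prod_dirac,
      Measure.map_map (show Measurable (fun p : ℝ × ℝ => p.1 + p.2) from measurable_fst.add measurable_snd) measurable_prodMk_right]
    have h1 : ((fun p : ℝ × ℝ => p.1 + p.2) ∘ (fun x => (x, m₂))) = (· + m₂) := rfl
    rw [h1, gaussianReal_map_add_const, add_zero]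
  have hv₁₂ : v₁ + v₂ ≠ 0 := by simp [hv₁, hv₂]
  ext s hs
  rw [Measure.map_apply (by fun_prop) hs,
    gaussianReal_of_var_ne_zero _ hv₁, gaussianReal_of_var_ne_zero _ hv₂,
    gaussianReal_of_var_ne_zero _ hv₁₂, withDensity_apply _ hs]
  rw [Measure.prod_apply (show MeasurableSet ((fun p : ℝ × ℝ => p.1 + p.2) ⁻¹' s) from (measurable_fst.add measurable_snd) hs)]
  have hind : ∀ x : ℝ, ((volume.withDensity (gaussianPDF m₂ v₂))
      (Prod.mk x ⁻¹' ((fun p : ℝ × ℝ => p.1 + p.2) ⁻¹' s)))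
      = ∫⁻ y, s.indicator (fun _ => (1:ℝ≥0∞)) (x + y) * gaussianPDF m₂ v₂ y := by
    intro x
    have hms : MeasurableSet (Prod.mk x ⁻¹' ((fun p : ℝ × ℝ => p.1 + p.2) ⁻¹' s)) :=
      (hs.preimage (by fun_prop)).preimage (by fun_prop)
    rw [withDensity_apply _ hms, ← lintegral_indicator hms _]
    congr 1; ext y
    by_cases hy : x + y ∈ s <;> simp [Set.indicator, hy, Set.mem_preimage]
  simp_rw [hind]
  have hswap : ∫⁻ x, (∫⁻ y, s.indicator (fun _ => (1:ℝ≥0∞)) (x + y) * gaussianPDF m₂ v₂ y)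
        ∂(volume.withDensity (gaussianPDF m₁ v₁))
      = ∫⁻ x, gaussianPDF m₁ v₁ x *
          ∫⁻ y, s.indicator (fun _ => (1:ℝ≥0∞)) (x + y) * gaussianPDF m₂ v₂ y := by
    rw [lintegral_withDensity_eq_lintegral_mul _ (measurable_gaussianPDF _ _)]
    · rfl
    · exact Measurable.lintegral_prod_right' (f := fun (q : ℝ × ℝ) =>
        s.indicator (fun _ => (1:ℝ≥0∞)) (q.1 + q.2) * gaussianPDF m₂ v₂ q.2)
        (((measurable_const.indicator hs).comp (measurable_fst.add measurable_snd)).mul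
          ((measurable_gaussianPDF _ _).comp measurable_snd))
  rw [hswap]
  have htrans : ∀ x : ℝ, (∫⁻ y, s.indicator (fun _ => (1:ℝ≥0∞)) (x + y) * gaussianPDF m₂ v₂ y)
      = ∫⁻ z, s.indicator (fun _ => (1:ℝ≥0∞)) z * gaussianPDF m₂ v₂ (z - x) := by
    intro x
    rw [← lintegral_add_right_eq_self
      (fun z => s.indicator (fun _ => (1:ℝ≥0∞)) z * gaussianPDF m₂ v₂ (z - x)) x]
    congr 1; ext y
    simp [add_comm x y]
  simp_rw [htrans]
  calc ∫⁻ x, gaussianPDF m₁ v₁ x *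
        ∫⁻ z, s.indicator (fun _ => (1:ℝ≥0∞)) z * gaussianPDF m₂ v₂ (z - x)
      = ∫⁻ x, ∫⁻ z, s.indicator (fun _ => (1:ℝ≥0∞)) z *
          (gaussianPDF m₁ v₁ x * gaussianPDF m₂ v₂ (z - x)) := by
        congr 1; ext x
        rw [← lintegral_const_mul _ (by
          exact (measurable_const.indicator hs).mul
            ((measurable_gaussianPDF _ _).comp (measurable_id.sub measurable_const)))]
        congr 1; ext z; ring
    _ = ∫⁻ z, ∫⁻ x, s.indicator (fun _ => (1:ℝ≥0∞)) z *
          (gaussianPDF m₁ v₁ x * gaussianPDF m₂ v₂ (z - x)) := by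
        rw [lintegral_lintegral_swap]
        apply Measurable.aemeasurable
        exact (((measurable_const.indicator hs).comp measurable_snd).mul
          (((measurable_gaussianPDF _ _).comp measurable_fst).mul
            ((measurable_gaussianPDF _ _).comp (measurable_snd.sub measurable_fst))))
    _ = ∫⁻ z, s.indicator (fun _ => (1:ℝ≥0∞)) z * gaussianPDF (m₁ + m₂) (v₁ + v₂) z := by
        congr 1; ext z
        rw [lintegral_const_mul _ (by
          exact (measurable_gaussianPDF _ _).mul
            ((measurable_gaussianPDF _ _).comp (measurable_const.sub measurable_id))),
          lint_conv _ _ _ _ hv₁ hv₂]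
    _ = ∫⁻ z in s, gaussianPDF (m₁ + m₂) (v₁ + v₂) z := by
        rw [← lintegral_indicator hs _]
        congr 1; ext z
        by_cases hz : z ∈ s <;> simp [Set.indicator, hz]

lemma pi_map_wsum : ∀ (n : ℕ) (c m : Fin n → ℝ) (v : Fin n → ℝ≥0),
    (Measure.pi fun i => gaussianReal (m i) (v i)).map
        (fun z : Fin n → ℝ => ∑ i, c i * z i)
      = gaussianReal (∑ i, c i * m i) (∑ i, (c i ^ 2).toNNReal * v i) := by
  intro n
  induction n with
  | zero =>
    intro c m v
    rw [Measure.pi_of_empty, Measure.map_dirac' (by fun_prop : Measurable (fun z : Fin 0 → ℝ => ∑ i, c i * z i))]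
    simp [gaussianReal_zero_var]
  | succ n ih =>
    intro c m v
    have hmp := measurePreserving_piFinSuccAbove (fun i => gaussianReal (m i) (v i)) 0
    set e := MeasurableEquiv.piFinSuccAbove (fun _ : Fin (n + 1) => ℝ) 0 with he
    have hcomp : (fun z : Fin (n + 1) → ℝ => ∑ i, c i * z i)
        = (fun p : ℝ × (Fin n → ℝ) => c 0 * p.1 + ∑ j, c ((0 : Fin (n+1)).succAbove j) * p.2 j)
          ∘ e := by
      funext z
      simp only [Function.comp_apply, he, MeasurableEquiv.piFinSuccAbove,
        MeasurableEquiv.coe_mk, Fin.insertNthEquiv]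
      rw [Fin.sum_univ_succAbove (fun i => c i * z i) 0]
      rfl
    rw [hcomp, ← Measure.map_map (by fun_prop) e.measurable, hmp.map_eq]
    have hsplit : (fun p : ℝ × (Fin n → ℝ) =>
          c 0 * p.1 + ∑ j, c ((0 : Fin (n+1)).succAbove j) * p.2 j)
        = (fun q : ℝ × ℝ => q.1 + q.2) ∘ (Prod.map (fun t : ℝ => c 0 * t)
            (fun w : Fin n → ℝ => ∑ j, c ((0 : Fin (n+1)).succAbove j) * w j)) := rfl
    rw [hsplit, ← Measure.map_map (by fun_prop) (by fun_prop),
      ← Measure.map_prod_map _ _ (by fun_prop) (by fun_prop),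
      gaussianReal_map_const_mul (c 0),
      ih (fun j => c ((0 : Fin (n+1)).succAbove j)) (fun j => m ((0 : Fin (n+1)).succAbove j))
        (fun j => v ((0 : Fin (n+1)).succAbove j)),
      gauss_conv]
    have hnn : (NNReal.mk ((c 0) ^ 2) (sq_nonneg _) : ℝ≥0) = (c 0 ^ 2).toNNReal := by
      ext; simp [Real.coe_toNNReal _ (sq_nonneg _)]
    rw [hnn, Fin.sum_univ_succAbove (fun i => c i * m i) 0,
      Fin.sum_univ_succAbove (fun i => (c i ^ 2).toNNReal * v i) 0]


lemma Phi_eq_cdf (t : ℝ) : Phi t = cdf (gaussianReal 0 1) t := (cdf_eq_real _ t).symm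

lemma Phi_tendsto_atBot : Filter.Tendsto Phi Filter.atBot (nhds 0) := by
  have : Phi = ⇑(cdf (gaussianReal 0 1)) := funext Phi_eq_cdf
  rw [this]; exact tendsto_cdf_atBot _

lemma Phi_tendsto_atTop : Filter.Tendsto Phi Filter.atTop (nhds 1) := by
  have : Phi = ⇑(cdf (gaussianReal 0 1)) := funext Phi_eq_cdf
  rw [this]; exact tendsto_cdf_atTop _

lemma Phi_mono : Monotone Phi := by
  have : Phi = ⇑(cdf (gaussianReal 0 1)) := funext Phi_eq_cdf
  rw [this]; exact monotone_cdf _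

lemma Phi_eq_integral (t : ℝ) : Phi t = ∫ x in Set.Iic t, gaussianPDFReal 0 1 x := by
  rw [Phi, gaussianReal_apply_eq_integral _ one_ne_zero, ENNReal.toReal_ofReal]
  exact MeasureTheory.setIntegral_nonneg measurableSet_Iic fun x _ => gaussianPDFReal_nonneg _ _ _

lemma Phi_sub (a b : ℝ) (hab : a ≤ b) :
    Phi b = Phi a + ∫ u in a..b, gaussianPDFReal 0 1 u := by
  rw [Phi_eq_integral, Phi_eq_integral, intervalIntegral.integral_of_le hab]
  rw [← Set.Iic_union_Ioc_eq_Iic hab,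
    MeasureTheory.setIntegral_union (Set.Iic_disjoint_Ioc le_rfl) measurableSet_Ioc
      (integrable_gaussianPDFReal 0 1).integrableOn (integrable_gaussianPDFReal 0 1).integrableOn]

lemma Phi_continuous : Continuous Phi := by
  have key : ∀ t, Phi t = Phi 0 + ∫ u in (0:ℝ)..t, gaussianPDFReal 0 1 u := by
    intro t
    rcases le_total 0 t with h | h
    · exact Phi_sub 0 t h
    · have := Phi_sub t 0 h
      rw [intervalIntegral.integral_symm]
      linarith
  rw [funext key]
  exact continuous_const.add (intervalIntegral.continuous_primitive
    (fun a b => (integrable_gaussianPDFReal 0 1).intervalIntegrable) 0)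

lemma Phi_PhiInv {p : ℝ} (hp : p ∈ Set.Ioo (0:ℝ) 1) : Phi (PhiInv p) = p := by
  obtain ⟨a, ha⟩ : ∃ a, Phi a < p :=
    (Phi_tendsto_atBot.eventually_lt_const hp.1).exists
  obtain ⟨b, hb⟩ : ∃ b, p < Phi b :=
    (Phi_tendsto_atTop.eventually_const_lt hp.2).exists
  have hsub := intermediate_value_Icc (min_le_max (a := a) (b := b))
    Phi_continuous.continuousOn
  have hpmem : p ∈ Set.Icc (Phi (min a b)) (Phi (max a b)) :=
    ⟨le_trans (Phi_mono (min_le_left a b)) ha.le |>.trans (le_refl p) |>.trans (le_refl p),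
      le_trans hb.le (Phi_mono (le_max_right a b))⟩
  obtain ⟨t, _, ht⟩ := hsub hpmem
  exact Function.invFun_eq ⟨t, ht⟩

lemma gauss_Iic (m : ℝ) (v : ℝ≥0) (hv : v ≠ 0) (t : ℝ) :
    ((gaussianReal m v) (Set.Iic t)).toReal = Phi ((t - m) / Real.sqrt v) := by
  have hvpos : (0:ℝ) < v := lt_of_le_of_ne v.2 (by exact_mod_cast Ne.symm hv)
  have hs : (0:ℝ) < Real.sqrt v := Real.sqrt_pos.mpr hvpos
  have h1 : gaussianReal m v = (gaussianReal 0 1).map (fun x => Real.sqrt v * x + m) := by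
    have h2 : (gaussianReal 0 1).map ((Real.sqrt v : ℝ) * ·)
        = gaussianReal 0 v := by
      rw [gaussianReal_map_const_mul]
      congr
      · ring
      · ext
        simp [Real.sq_sqrt v.2]
    have h3 := gaussianReal_map_add_const (μ := 0) (v := v) m
    rw [← h2, Measure.map_map (by fun_prop) (by fun_prop)] at h3
    rw [zero_add] at h3
    rw [← h3]
    rfl
  rw [h1, Measure.map_apply (by fun_prop) measurableSet_Iic]
  have hpre : (fun x => Real.sqrt v * x + m) ⁻¹' Set.Iic t
      = Set.Iic ((t - m) / Real.sqrt v) := by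
    ext u
    simp only [Set.mem_preimage, Set.mem_Iic]
    rw [le_div_iff₀ hs]
    constructor <;> intro h <;> nlinarith
  rw [hpre]
  rfl


/-- Tightness of the Gaussian shift lower bound: the half-space
`H = {z : ⟪δ, z - x⟫ ≤ σ‖δ‖₂Φ⁻¹(p)}` satisfies `μ_x(H) = p` and
`μ_{x+δ}(H) = Φ(Φ⁻¹(p) - ‖δ‖₂/σ)`, so the bound is attained. -/
theorem gaussian_shift_halfspace_tight
    {d : ℕ} {σ : ℝ} (hσ : 0 < σ)
    (x δ : EuclideanSpace ℝ (Fin d)) (hδ : δ ≠ 0)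
    (p : ℝ) (hp : p ∈ Set.Ioo (0 : ℝ) 1) :
    (gaussPi d σ x {z | ⟪δ, z - x⟫ ≤ σ * ‖δ‖ * PhiInv p}).toReal = p ∧
    (gaussPi d σ (x + δ) {z | ⟪δ, z - x⟫ ≤ σ * ‖δ‖ * PhiInv p}).toReal
      = Phi (PhiInv p - ‖δ‖ / σ) := by

  have hδ0 : (0:ℝ) < ‖δ‖ := norm_pos_iff.mpr hδ
  have hσδ : (0:ℝ) < σ * ‖δ‖ := by positivity
  set c : ℝ := σ * ‖δ‖ * PhiInv p with hc
  set V : ℝ≥0 := ⟨σ ^ 2, sq_nonneg σ⟩ with hV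
  set W : ℝ≥0 := ∑ i, (δ i ^ 2).toNNReal * V with hW
  have hWcoe : (W:ℝ) = (σ * ‖δ‖) ^ 2 := by
    have hnorm : ‖δ‖ ^ 2 = ∑ i, δ i ^ 2 := by
      rw [EuclideanSpace.norm_eq, Real.sq_sqrt (Finset.sum_nonneg fun i _ => by positivity)]
      simp [sq_abs]
    push_cast [hW]
    rw [mul_pow, hnorm, Finset.mul_sum]
    refine Finset.sum_congr rfl fun i _ => ?_
    rw [Real.coe_toNNReal _ (sq_nonneg _)]
    show δ i ^ 2 * σ ^ 2 = σ ^ 2 * δ i ^ 2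
    ring
  have hWne : W ≠ 0 := by
    intro h
    rw [h] at hWcoe
    simp only [NNReal.coe_zero] at hWcoe
    nlinarith
  have hsqrtW : Real.sqrt W = σ * ‖δ‖ := by
    rw [hWcoe, Real.sqrt_sq hσδ.le]
  have hLmeas : Measurable (fun z : EuclideanSpace ℝ (Fin d) => ∑ i, δ i * z i) := by
    exact Finset.measurable_sum _ fun i _ => ((measurable_pi_apply i).comp (WithLp.measurable_ofLp 2 (Fin d → ℝ))).const_mul _
  have hset : {z : EuclideanSpace ℝ (Fin d) | ⟪δ, z - x⟫ ≤ c}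
      = (fun z : EuclideanSpace ℝ (Fin d) => ∑ i, δ i * z i) ⁻¹'
        Set.Iic (c + ∑ i, δ i * x i) := by
    ext z
    simp only [Set.mem_setOf_eq, Set.mem_preimage, Set.mem_Iic, PiLp.inner_apply,
      RCLike.inner_apply, conj_trivial, PiLp.sub_apply]
    have hdist : ∑ i, (z i - x i) * δ i = (∑ i, δ i * z i) - ∑ i, δ i * x i := by
      rw [← Finset.sum_sub_distrib]
      exact Finset.sum_congr rfl fun i _ => by ring
    rw [hdist]
    constructor <;> intro h <;> linarith
  have main : ∀ y : EuclideanSpace ℝ (Fin d),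
      (gaussPi d σ y {z | ⟪δ, z - x⟫ ≤ c}).toReal
        = Phi ((c + ∑ i, δ i * x i - ∑ i, δ i * y i) / (σ * ‖δ‖)) := by
    intro y
    rw [hset, ← Measure.map_apply hLmeas measurableSet_Iic]
    have hmap : (gaussPi d σ y).map (fun z : EuclideanSpace ℝ (Fin d) => ∑ i, δ i * z i)
        = gaussianReal (∑ i, δ i * y i) W := by
      rw [gaussPi, Measure.map_map hLmeas (MeasurableEquiv.toLp 2 (Fin d → ℝ)).measurable]
      exact pi_map_wsum d (fun i => δ i) (fun i => y i) (fun _ => V)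
    rw [hmap, gauss_Iic _ _ hWne, hsqrtW]
  constructor
  · rw [main x]
    have : (c + ∑ i, δ i * x i - ∑ i, δ i * x i) / (σ * ‖δ‖) = PhiInv p := by
      rw [hc]; field_simp; ring
    rw [this, Phi_PhiInv hp]
  · rw [main (x + δ)]
    congr 1
    have hsum : ∑ i, δ i * (x + δ) i = (∑ i, δ i * x i) + ‖δ‖ ^ 2 := by
      have hnorm : ‖δ‖ ^ 2 = ∑ i, δ i ^ 2 := by
        rw [EuclideanSpace.norm_eq, Real.sq_sqrt (Finset.sum_nonneg fun i _ => by positivity)]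
        simp [sq_abs]
      simp only [PiLp.add_apply]
      rw [hnorm, ← Finset.sum_add_distrib]
      exact Finset.sum_congr rfl fun i _ => by ring
    rw [hsum, hc]
    field_simp
    ring
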